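/- arXiv:2007.15556 — 5 statements merged into one kernel-verified Lean document; each statement's English description precedes it below -/
import Mathlib

section
/- If a finite simple 4-critical graph G admits a (7,2)-colouring (a graph homomorphism to the circular clique G_{7,2}), then the complement of G contains a Hamiltonian cycle. -/
open SimpleGraph

/-- The circular clique `G_{p,q}` on vertex set `ZMod p`. -/
def circClique (p q : ℕ) : SimpleGraph (ZMod p) where
  Adj i j := i ≠ j ∧ (q ≤ (i - j).val ∧ (i - j).val ≤ p - q)
    ∧ (q ≤ (j - i).val ∧ (j - i).val ≤ p - q)
  symm := ⟨fun _ _ ⟨h, h1, h2⟩ => ⟨h.symm, h2, h1⟩⟩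
  loopless := ⟨fun _ h => h.1 rfl⟩

/-- `G` admits a `(p,q)`-circular colouring. -/
def HasCircColoring {V : Type*} (G : SimpleGraph V) (p q : ℕ) : Prop :=
  Nonempty (G →g circClique p q)

/-- A graph is 4-critical. -/
def FourCritical {V : Type*} (G : SimpleGraph V) : Prop :=
  ¬ G.Colorable 3 ∧ ∀ e ∈ G.edgeSet, (G.deleteEdges {e}).Colorable 3

/-- The wheel on `n` vertices: a cycle on `n-1` vertices plus a hub. -/
def wheel (n : ℕ) : SimpleGraph (Option (Fin (n - 1))) where
  Adj u v := match u, v with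
    | none, none => False
    | none, some _ => True
    | some _, none => True
    | some i, some j => (cycleGraph (n - 1)).Adj i j
  symm := by constructor; rintro (_|i) (_|j) h <;> simp_all <;> exact h.symm
  loopless := by constructor; rintro (_|i) h <;> simp_all

private instance circDec : DecidableRel (circClique 7 2).Adj := fun i j =>
  decidable_of_iff (i ≠ j ∧ (2 ≤ (i - j).val ∧ (i - j).val ≤ 5)
    ∧ (2 ≤ (j - i).val ∧ (j - i).val ≤ 5)) (by exact Iff.rfl)

private def col3 (c i : ZMod 7) : Fin 3 :=
  if (i - c).val ≤ 2 then 0 else if (i - c).val ≤ 4 then 1 else 2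

private def walkOfChain {V : Type*} (G : SimpleGraph V) :
    ∀ (v : V) (l : List V) (w : V), List.Chain G.Adj v (l ++ [w]) → G.Walk v w
  | _, [], _, h => Walk.cons (List.chain_cons.mp h).1 Walk.nil
  | _, a :: l, w, h =>
    Walk.cons (List.chain_cons.mp h).1 (walkOfChain G a l w (List.chain_cons.mp h).2)

private lemma walkOfChain_support {V : Type*} (G : SimpleGraph V) :
    ∀ (v : V) (l : List V) (w : V) (h : List.Chain G.Adj v (l ++ [w])),
      (walkOfChain G v l w h).support = v :: (l ++ [w])
  | _, [], _, _ => rfl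
  | v, a :: l, w, h => by
    simp [walkOfChain, Walk.support_cons]
    exact walkOfChain_support G a l w _

private lemma walkOfChain_edges_not_mem {V : Type*} (G : SimpleGraph V) (v₀ a : V) :
    ∀ (x : V) (l : List V) (h : List.Chain G.Adj x (l ++ [v₀])),
      v₀ ∉ x :: l → a ≠ x → a ∉ l → s(v₀, a) ∉ (walkOfChain G x l v₀ h).edges
  | x, [], h, hv, hax, _ => by
    simp only [walkOfChain, Walk.edges_cons, Walk.edges_nil, List.mem_singleton]
    intro he
    rcases Sym2.eq_iff.mp he with ⟨h1, h2⟩ | ⟨h1, h2⟩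
    · exact hv (h1 ▸ (List.mem_cons_self (a := x) (l := [])))
    · exact hax h2
  | x, b :: l, h, hv, hax, hal => by
    simp only [walkOfChain, Walk.edges_cons, List.mem_cons]
    rintro (he | he)
    · rcases Sym2.eq_iff.mp he with ⟨h1, h2⟩ | ⟨h1, h2⟩
      · exact hv (h1 ▸ (List.mem_cons_self (a := x) (l := (b :: l))))
      · exact hv (by rw [h1]; exact List.mem_cons_of_mem x ((List.mem_cons_self (a := b) (l := l))))
    · exact walkOfChain_edges_not_mem G v₀ a b l _
        (fun hm => hv (List.mem_cons_of_mem x hm)) (fun hab => hal (hab ▸ (List.mem_cons_self (a := b) (l := l))))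
        (fun hm => hal (List.mem_cons_of_mem b hm)) he

private lemma hamCycle_of_list {V : Type*} [DecidableEq V] (G : SimpleGraph V)
    (v₀ a b : V) (l : List V)
    (hchain : List.Chain G.Adj v₀ ((a :: b :: l) ++ [v₀]))
    (hnodup : (v₀ :: a :: b :: l).Nodup)
    (hmem : ∀ v : V, v ∈ v₀ :: a :: b :: l) :
    ∃ (v : V) (p : G.Walk v v), p.IsHamiltonianCycle := by
  have h₁ : G.Adj v₀ a := (List.chain_cons.mp hchain).1
  have hrest : List.Chain G.Adj a ((b :: l) ++ [v₀]) := (List.chain_cons.mp hchain).2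
  set q : G.Walk a v₀ := walkOfChain G a (b :: l) v₀ hrest with hq
  have hsup : q.support = a :: (b :: l ++ [v₀]) := walkOfChain_support G a (b :: l) v₀ hrest
  have hperm : ((a :: b :: l) ++ [v₀]).Perm (v₀ :: a :: b :: l) :=
    List.perm_append_singleton v₀ (a :: b :: l)
  have hnd : ((a :: b :: l) ++ [v₀]).Nodup := hperm.nodup_iff.mpr hnodup
  have qpath : q.IsPath := by
    rw [Walk.isPath_def, hsup]; exact hnd
  have hv₀ : v₀ ∉ a :: b :: l := fun hm => (List.nodup_cons.mp hnodup).1 hm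
  have he : s(v₀, a) ∉ q.edges := by
    rw [hq]
    simp only [walkOfChain, Walk.edges_cons, List.mem_cons]
    rintro (he | he)
    · rcases Sym2.eq_iff.mp he with ⟨h1, h2⟩ | ⟨h1, h2⟩
      · exact hv₀ (h1 ▸ (List.mem_cons_self (a := a) (l := (b :: l))))
      · exact hv₀ (by rw [h1]; exact List.mem_cons_of_mem a ((List.mem_cons_self (a := b) (l := l))))
    · exact walkOfChain_edges_not_mem G v₀ a b l _
        (fun hm => hv₀ (List.mem_cons_of_mem a hm))
        (fun h' => (List.nodup_cons.mp (List.nodup_cons.mp hnodup).2).1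
          (h' ▸ (List.mem_cons_self (a := b) (l := l))))
        (fun hm => (List.nodup_cons.mp (List.nodup_cons.mp hnodup).2).1
          (List.mem_cons_of_mem b hm)) he
  refine ⟨v₀, Walk.cons h₁ q, ?_⟩
  rw [Walk.isHamiltonianCycle_iff_isCycle_and_support_count_tail_eq_one]
  constructor
  · exact Path.cons_isCycle ⟨q, qpath⟩ h₁ he
  · intro x
    have h2 : (Walk.cons h₁ q).support = v₀ :: q.support := Walk.support_cons _ _
    rw [h2, List.tail_cons, hsup]
    have h3 : (a :: (b :: l ++ [v₀])).count x = (v₀ :: a :: b :: l).count x :=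
      List.Perm.count_eq hperm x
    rw [h3]
    exact List.count_eq_one_of_mem hnodup (hmem x)

private lemma chain'_flatten {V : Type*} {R : V → V → Prop} :
    ∀ (Bs : List (List V)), (∀ B ∈ Bs, B ≠ [] ∧ B.Chain' R) →
      Bs.Chain' (fun B B' => ∀ x ∈ B, ∀ y ∈ B', R x y) →
      (Bs.flatten).Chain' R
  | [], _, _ => List.IsChain.nil
  | [B], hB, _ => by simpa using (hB B (by simp)).2
  | B :: B' :: Bs, hB, hS => by
    rw [List.flatten_cons]
    refine ((hB B (by simp)).2).append
      (chain'_flatten (B' :: Bs) (fun b hb => hB b (List.mem_cons_of_mem _ hb))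
        ((List.isChain_cons_cons.mp hS).2)) ?_
    intro x hx y hy
    have hx' : x ∈ B := by
      obtain ⟨h', rfl⟩ := List.mem_getLast?_eq_getLast hx
      exact List.getLast_mem h'
    rw [List.flatten_cons, List.head?_append_of_ne_nil _ (hB B' (by simp)).1] at hy
    exact (List.isChain_cons_cons.mp hS).1 x hx' y (List.mem_of_mem_head? hy)

/-- If a 4-critical graph admits a (7,2)-colouring, then its complement contains a
Hamiltonian cycle. -/
theorem stmt_2 {V : Type*} [Fintype V] [DecidableEq V] (G : SimpleGraph V)
    (hcrit : FourCritical G) (hcol : HasCircColoring G 7 2) :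
    ∃ (v : V) (p : Gᶜ.Walk v v), p.IsHamiltonianCycle := by
  classical
  obtain ⟨f⟩ := hcol
  have key : ∀ (c i j : ZMod 7), i ≠ c → j ≠ c → (circClique 7 2).Adj i j →
      col3 c i ≠ col3 c j := by decide
  have hsurj : ∀ c : ZMod 7, ∃ v, f v = c := by
    by_contra hns
    push_neg at hns
    obtain ⟨c, hc⟩ := hns
    exact hcrit.1 ⟨SimpleGraph.Coloring.mk (fun v => col3 c (f v))
      (fun {u v} hadj => key c (f u) (f v) (hc u) (hc v) (f.map_adj hadj))⟩
  have hnadj : ∀ c : ZMod 7, ¬ (circClique 7 2).Adj c (c + 1) := by decide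
  have hsame : ∀ u v : V, u ≠ v → f u = f v → Gᶜ.Adj u v := by
    intro u v hne hf
    rw [compl_adj]
    refine ⟨hne, fun hadj => ?_⟩
    have h := f.map_adj hadj
    rw [hf] at h
    exact (circClique 7 2).irrefl h
  have hnext : ∀ u v : V, f v = f u + 1 → Gᶜ.Adj u v := by
    intro u v hf
    rw [compl_adj]
    constructor
    · rintro rfl
      have : f u ≠ f u + 1 := by
        have : ∀ c : ZMod 7, c ≠ c + 1 := by decide
        exact this _
      exact this hf
    · intro hadj
      have h := f.map_adj hadj
      rw [hf] at h
      exact hnadj (f u) h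
  set B : ZMod 7 → List V := fun c => (Finset.univ.filter (fun v => f v = c)).toList with hB
  have hmemB : ∀ (v : V) (c : ZMod 7), v ∈ B c ↔ f v = c := by
    intro v c; simp [hB, Finset.mem_toList]
  have hndB : ∀ c, (B c).Nodup := fun c => Finset.nodup_toList _
  have hneB : ∀ c, B c ≠ [] := by
    intro c
    obtain ⟨v, hv⟩ := hsurj c
    exact List.ne_nil_of_mem ((hmemB v c).mpr hv)
  have hchainB : ∀ c, (B c).Chain' Gᶜ.Adj := by
    intro c
    refine List.Pairwise.isChain (List.Pairwise.imp_of_mem ?_ (hndB c))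
    intro u v hu hv hne
    exact hsame u v hne (((hmemB u c).mp hu).trans ((hmemB v c).mp hv).symm)
  have hcross : ∀ (c d : ZMod 7), d = c + 1 → ∀ x ∈ B c, ∀ y ∈ B d, Gᶜ.Adj x y := by
    intro c d hcd x hx y hy
    refine hnext x y ?_
    rw [(hmemB y d).mp hy, (hmemB x c).mp hx, hcd]
  set cs : List (ZMod 7) := [0, 1, 2, 3, 4, 5, 6] with hcs
  set Ls : List (List V) := cs.map B with hLs
  set L : List V := Ls.flatten with hL
  have hallc : ∀ c : ZMod 7, c ∈ cs := by rw [hcs]; decide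
  have hLmem : ∀ v : V, v ∈ L := fun v =>
    List.mem_flatten.mpr ⟨B (f v), List.mem_map_of_mem (f := B) (hallc (f v)), (hmemB v _).mpr rfl⟩
  have hLnodup : L.Nodup := by
    rw [hL, List.nodup_flatten]
    constructor
    · intro l hl
      obtain ⟨c, _, rfl⟩ := List.mem_map.mp hl
      exact hndB c
    · rw [hLs]
      refine List.pairwise_map.mpr ?_
    -- Pairwise (fun c d => Disjoint (B c) (B d)) cs
      have hpne : cs.Pairwise Ne := by rw [hcs]; decide
      refine hpne.imp ?_
      intro c d hcd x hxc hxd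
      exact hcd (((hmemB x c).mp hxc).symm.trans ((hmemB x d).mp hxd))
  -- head of B 0
  obtain ⟨x0, t0, hB0⟩ := List.exists_cons_of_ne_nil (hneB 0)
  have hfx0 : f x0 = 0 := (hmemB x0 0).mp (by rw [hB0]; exact (List.mem_cons_self (a := _) (l := _)))
  -- cyclic chain on L ++ [x0]
  have hchainL : List.Chain' Gᶜ.Adj (L ++ [x0]) := by
    have h1 : (Ls ++ [[x0]]).flatten = L ++ [x0] := by
      rw [List.flatten_append]; simp [hL]
    rw [← h1]
    refine chain'_flatten _ ?_ ?_
    · intro Bk hBk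
      rcases List.mem_append.mp hBk with h | h
      · obtain ⟨c, _, rfl⟩ := List.mem_map.mp (by rwa [hLs] at h)
        exact ⟨hneB c, hchainB c⟩
      · rw [List.mem_singleton.mp h]
        exact ⟨List.cons_ne_nil _ _, List.isChain_singleton _⟩
    · rw [hLs, hcs]
      simp only [List.map_cons, List.map_nil, List.cons_append, List.nil_append]
      refine List.isChain_cons_cons.mpr ⟨hcross 0 1 (by decide), ?_⟩
      refine List.isChain_cons_cons.mpr ⟨hcross 1 2 (by decide), ?_⟩
      refine List.isChain_cons_cons.mpr ⟨hcross 2 3 (by decide), ?_⟩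
      refine List.isChain_cons_cons.mpr ⟨hcross 3 4 (by decide), ?_⟩
      refine List.isChain_cons_cons.mpr ⟨hcross 4 5 (by decide), ?_⟩
      refine List.isChain_cons_cons.mpr ⟨hcross 5 6 (by decide), ?_⟩
      refine List.isChain_cons_cons.mpr ⟨?_, List.isChain_singleton _⟩
      intro x hx y hy
      rw [List.mem_singleton.mp hy]
      refine hnext x x0 ?_
      rw [hfx0, (hmemB x 6).mp hx]
      decide
  -- decompose L
  have hLhead : ∃ M, L = x0 :: M := by
    refine ⟨t0 ++ (([1, 2, 3, 4, 5, 6] : List (ZMod 7)).map B).flatten, ?_⟩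
    rw [hL, hLs, hcs]
    simp [hB0]
  obtain ⟨M, hM⟩ := hLhead
  obtain ⟨w1, hw1⟩ := hsurj 1
  obtain ⟨w2, hw2⟩ := hsurj 2
  have hw1x0 : w1 ≠ x0 := fun h => by rw [h, hfx0] at hw1; exact absurd hw1 (by decide)
  have hw2x0 : w2 ≠ x0 := fun h => by rw [h, hfx0] at hw2; exact absurd hw2 (by decide)
  have hw12 : w1 ≠ w2 := fun h => by rw [h, hw2] at hw1; exact absurd hw1 (by decide)
  have hw1M : w1 ∈ M := by
    have := hLmem w1; rw [hM] at this
    rcases List.mem_cons.mp this with h | h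
    · exact absurd h hw1x0
    · exact h
  have hw2M : w2 ∈ M := by
    have := hLmem w2; rw [hM] at this
    rcases List.mem_cons.mp this with h | h
    · exact absurd h hw2x0
    · exact h
  obtain ⟨a, b, l'', hM2⟩ : ∃ a b l'', M = a :: b :: l'' := by
    cases M with
    | nil => exact absurd hw1M List.not_mem_nil
    | cons a M' =>
      cases M' with
      | nil =>
        exfalso
        rw [List.mem_singleton.mp hw1M, List.mem_singleton.mp hw2M] at hw12
        exact hw12 rfl
      | cons b l'' => exact ⟨a, b, l'', rfl⟩
  rw [hM2] at hM
  rw [hM] at hLnodup hchainL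
  have hmem' : ∀ v : V, v ∈ x0 :: a :: b :: l'' := fun v => hM ▸ hLmem v
  have hchain2 : List.Chain Gᶜ.Adj x0 ((a :: b :: l'') ++ [x0]) := hchainL
  exact hamCycle_of_list Gᶜ x0 a b l'' hchain2 hLnodup hmem'
end

section
/- Let k ≥ 2 and let α be a type of colours. Let L assign to each vertex of the complete graph on k + 1 vertices a finite set L(v) ⊆ α with |L(v)| = k. If L is not constant (some two vertices receive different lists), then there is a function f on the vertices with f(v) ∈ L(v) for every vertex v and f(u) ≠ f(v) for all distinct vertices u, v. -/
open SimpleGraph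

/-- A non-uniform `k`-list-assignment on the complete graph on `k+1` vertices admits a
proper list colouring (an injective choice function). -/
theorem stmt_8 {α : Type*} (k : ℕ) (hk : 2 ≤ k) (L : Fin (k + 1) → Finset α)
    (hcard : ∀ v, (L v).card = k) (hnonuniform : ∃ u v, L u ≠ L v) :
    ∃ f : Fin (k + 1) → α, (∀ v, f v ∈ L v) ∧ Function.Injective f := by
    classical
  have hall : ∀ s : Finset (Fin (k + 1)), s.card ≤ (s.biUnion L).card := ?_
  · obtain ⟨f, hinj, hmem⟩ :=
      (Finset.all_card_le_biUnion_card_iff_exists_injective L).mp hall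
    exact ⟨f, hmem, hinj⟩
  intro s
  rcases s.eq_empty_or_nonempty with rfl | ⟨v, hv⟩
  · simp
  rcases lt_or_eq_of_le (Finset.card_le_univ s) with hlt | heq
  · calc s.card ≤ k := by simpa using Nat.lt_succ_iff.mp (by simpa using hlt)
    _ = (L v).card := (hcard v).symm
    _ ≤ (s.biUnion L).card := Finset.card_le_card fun x hx => Finset.mem_biUnion.mpr ⟨v, hv, hx⟩
  · have hs : s = Finset.univ := Finset.eq_univ_of_card s (by simpa using heq)
    subst hs
    obtain ⟨u, w, huw⟩ := hnonuniform
    have hne : ¬ (L u ⊆ L w) := fun hsub =>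
      huw (Finset.eq_of_subset_of_card_le hsub (by rw [hcard, hcard]))
    obtain ⟨x, hxu, hxw⟩ := Finset.not_subset.mp hne
    have hsub : insert x (L w) ⊆ Finset.univ.biUnion L := by
      intro y hy
      rcases Finset.mem_insert.mp hy with rfl | hy
      · exact Finset.mem_biUnion.mpr ⟨u, Finset.mem_univ u, hxu⟩
      · exact Finset.mem_biUnion.mpr ⟨w, Finset.mem_univ w, hy⟩
    calc (Finset.univ : Finset (Fin (k+1))).card = k + 1 := by simp
      _ = (insert x (L w)).card := by rw [Finset.card_insert_of_notMem hxw, hcard]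
      _ ≤ _ := Finset.card_le_card hsub
end

section
/- Let k ≥ 1 and let L be a list assignment on the cycle C_{2k+1} with 2k+1 vertices such that every list L(v) is a 4-interval of ZMod 7 (a set of the form {a, a+1, a+2, a+3} for some a ∈ ZMod 7). Then C_{2k+1} admits an L-(7,2)-colouring if and only if L is not uniform (not all lists are equal). -/
open SimpleGraph

namespace Stmt10

def tblN : ℕ → ℕ
  | 0 => 18155131547610630336
  | 1 => 18300937776300354784
  | 2 => 18373840925148118768
  | 3 => 18446462585847873392
  | 4 => 18446744069414549296
  | 5 => 18446744071418884880
  | _ => 17868022689859604864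

def F (d n : ℕ) : ℕ := (tblN d) >>> (4*n) &&& 15

def stepN (d : ZMod 7) (s : ℕ) : ℕ :=
  F d.val (s &&& 15) ||| (F d.val ((s >>> 4) &&& 15)) <<< 4 |||
  (F d.val ((s >>> 8) &&& 15)) <<< 8 ||| (F d.val ((s >>> 12) &&& 15)) <<< 12

def Mem (s : ℕ) (e g : Fin 4) : Prop := Nat.testBit s (4*e.val + g.val)

instance (s : ℕ) (e g : Fin 4) : Decidable (Mem s e g) := by unfold Mem; infer_instance

def R : List ℕ := [6350, 6623, 7918, 8191, 12684, 12799, 13247, 13260, 13311, 15357, 15359, 15567, 15837, 16127, 16383, 29464, 29471, 29679, 29695, 30584, 30591, 30607, 30617, 30715, 30719, 30975, 31135, 31675, 31983, 32697, 32767, 34679, 36079, 36863, 38783, 38911, 39031, 39167, 39287, 39406, 39423, 40446, 40447, 40687, 40959, 46975, 47103, 47487, 47495, 47503, 47615, 47999, 48055, 48060, 48063, 48079, 48127, 48383, 49116, 49151, 49979, 49983, 52155, 52223, 52275, 52479, 52983, 52991, 53247, 54207, 54271, 56511, 56515, 56527, 56575, 56639, 56787, 56798, 56799, 56815, 56831,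 57087, 57326, 57343, 57757, 57855, 59807, 59871, 60893, 60927, 60953, 60959, 61081, 61151, 61153, 61167, 61183, 61299, 61439, 61853, 61934, 61951, 62267, 62268, 62271, 62399, 62429, 62463, 63281, 63294, 63295, 63351, 63353, 63359, 63419, 63438, 63487, 63607, 63694, 63743, 63895, 63902, 63903, 63967, 63999, 64375, 64407, 64408, 64415, 64443, 64447, 64511, 64699, 64707, 64719, 64751, 64767, 64827, 64971, 64972, 64975, 64989, 64991, 65023, 65181, 65245, 65257, 65261, 65262, 65263, 65279, 65305, 65310, 65311, 65331, 65339, 65341, 65343, 65395, 65399, 65403, 65404, 65407, 65415, 65420, 65423, 65433, 65437, 65439, 65463, 65465, 65467, 65471, 65483, 65484, 65486, 65487, 65491, 65500, 65501, 65503, 65513, 65517, 65518, 65519, 65521, 65523, 65527, 65528, 65529, 65531, 65532, 65533, 65534, 65535]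

def relN (d : ZMod 7) (g g' : Fin 4) : Prop :=
  2 ≤ (d.val + g'.val + 7 - g.val) % 7 ∧ (d.val + g'.val + 7 - g.val) % 7 ≤ 5

instance (d : ZMod 7) (g g' : Fin 4) : Decidable (relN d g g') := by unfold relN; infer_instance

theorem relN_eq : ∀ (d : ZMod 7) (g g' : Fin 4),
    (d.val + g'.val + 7 - g.val) % 7 = (d + (g'.val : ZMod 7) - (g.val : ZMod 7)).val := by decide

theorem fact1 : ∀ d : ZMod 7, stepN d 33825 ∈ R := by decide

set_option maxRecDepth 100000 in
set_option maxHeartbeats 4000000 in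
theorem fact2 : ∀ s ∈ R, ∀ d : ZMod 7, stepN d s ∈ R := by decide

set_option maxRecDepth 100000 in
set_option maxHeartbeats 4000000 in
theorem fact3 : ∀ s ∈ R, ∀ D : ZMod 7, D ≠ 0 → ∃ e g : Fin 4, Mem s e g ∧
    relN D g e := by decide

set_option maxRecDepth 100000 in
set_option maxHeartbeats 4000000 in
theorem fact4 : ∀ s ∈ (33825 :: R), ∀ d : ZMod 7, ∀ e g' : Fin 4,
    Mem (stepN d s) e g' → ∃ g : Fin 4, Mem s e g ∧ relN d g g' := by decide

theorem diagMem : ∀ e g : Fin 4, Mem 33825 e g → g = e := by decide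

theorem castval : ∀ e : Fin 4, ((e.val : ZMod 7)).val ≤ 3 := by decide

theorem mem_iff : ∀ a x : ZMod 7,
    (x = a ∨ x = a + 1 ∨ x = a + 2 ∨ x = a + 3) ↔ (x - a).val ≤ 3 := by decide

instance : DecidableRel (circClique 7 2).Adj := fun i j =>
  decidable_of_iff (i ≠ j ∧ (2 ≤ (i - j).val ∧ (i - j).val ≤ 7 - 2)
    ∧ (2 ≤ (j - i).val ∧ (j - i).val ≤ 7 - 2)) Iff.rfl

theorem adjC : ∀ x y : ZMod 7, 2 ≤ (x - y).val → (x - y).val ≤ 5 →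
    (circClique 7 2).Adj x y := by decide

theorem adjD : ∀ x y : ZMod 7, (circClique 7 2).Adj x y →
    2 ≤ (x - y).val ∧ (x - y).val ≤ 5 := by decide

theorem keyPar : ∀ x y : ZMod 7, x.val ≤ 3 → y.val ≤ 3 → 2 ≤ (x - y).val →
    (x - y).val ≤ 5 → (2 ≤ x.val ↔ ¬ 2 ≤ y.val) := by decide

theorem relZ {d : ZMod 7} {g g' : Fin 4} (h : relN d g g') :
    2 ≤ (d + (g'.val : ZMod 7) - (g.val : ZMod 7)).val ∧
      (d + (g'.val : ZMod 7) - (g.val : ZMod 7)).val ≤ 5 := by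
  unfold relN at h; rw [relN_eq] at h; exact h

def Sound (b : ℕ → ZMod 7) (n : ℕ) (s : ℕ) : Prop :=
  ∀ e g' : Fin 4, Mem s e g' → ∃ gf : ℕ → ZMod 7,
    gf 0 = b 0 + (e.val : ZMod 7) ∧ gf n = b n + (g'.val : ZMod 7) ∧
    (∀ t, t ≤ n → (gf t - b t).val ≤ 3) ∧
    (∀ t, t < n → 2 ≤ (gf (t+1) - gf t).val ∧ (gf (t+1) - gf t).val ≤ 5)

theorem path_main (b : ℕ → ZMod 7) : ∀ n, 1 ≤ n → ∃ s ∈ R, Sound b n s := by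
  intro n hn
  induction n, hn using Nat.le_induction with
  | base =>
    refine ⟨stepN (b 1 - b 0) 33825, fact1 _, ?_⟩
    intro e g' hm
    obtain ⟨g, hg, hrel⟩ := fact4 33825 List.mem_cons_self (b 1 - b 0) e g' hm
    have heg : g = e := diagMem e g hg
    rw [heg] at hrel
    refine ⟨fun t => if t = 0 then b 0 + (e.val : ZMod 7) else b 1 + (g'.val : ZMod 7),
      by simp, by simp, ?_, ?_⟩
    · intro t ht
      interval_cases t
      · simpa using castval e
      · simpa using castval g'
    · intro t ht
      interval_cases t
      have he : b 1 + (g'.val : ZMod 7) - (b 0 + (e.val : ZMod 7)) =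
          (b 1 - b 0) + (g'.val : ZMod 7) - (e.val : ZMod 7) := by ring
      simpa [he] using relZ hrel
  | succ n hn ih =>
    obtain ⟨s, hsR, hsound⟩ := ih
    refine ⟨stepN (b (n+1) - b n) s, fact2 s hsR _, ?_⟩
    intro e g'' hm
    obtain ⟨g', hg', hrel⟩ := fact4 s (List.mem_cons_of_mem _ hsR) _ e g'' hm
    obtain ⟨gf, h0, hend, hmem, hadj⟩ := hsound e g' hg'
    refine ⟨fun t => if t ≤ n then gf t else b (n+1) + ((g''.val : ZMod 7)), ?_, ?_, ?_, ?_⟩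
    · simpa using h0
    · simp
    · intro t ht
      by_cases h : t ≤ n
      · simpa [h] using hmem t h
      · have : t = n + 1 := by omega
        subst this
        simpa [h] using castval g''
    · intro t ht
      by_cases h : t < n
      · have h1 : t ≤ n := by omega
        have h2 : t + 1 ≤ n := by omega
        simpa [h1, h2] using hadj t h
      · have htn : t = n := by omega
        have hif1 : ¬ (n + 1 ≤ n) := by omega
        rw [htn]
        have he : b (n+1) + ((g''.val : ZMod 7)) - gf n =
            (b (n+1) - b n) + (g''.val : ZMod 7) - (g'.val : ZMod 7) := by
          rw [hend]; ring
        simpa [hif1, he] using relZ hrel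

end Stmt10

open Stmt10 Fin.NatCast Fin.CommRing in
/-- A 4-interval list assignment on an odd cycle `C_{2k+1}` admits a list
`(7,2)`-colouring iff it is not uniform. -/
theorem stmt_10 (k : ℕ) (hk : 1 ≤ k) (L : Fin (2 * k + 1) → Set (ZMod 7))
    (hL : ∀ v, ∃ a : ZMod 7, L v = {a, a + 1, a + 2, a + 3}) :
    (∃ f : Fin (2 * k + 1) → ZMod 7, (∀ v, f v ∈ L v) ∧
      ∀ u v, (cycleGraph (2 * k + 1)).Adj u v → (circClique 7 2).Adj (f u) (f v)) ↔
    ¬ (∀ u v, L u = L v) := by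
  choose a ha using hL
  have hone : ((1 : Fin (2 * k + 1))).val = 1 := by
    rw [Fin.val_one']
    exact Nat.mod_eq_of_lt (by omega)
  constructor
  · rintro ⟨f, hfL, hfadj⟩ huni
    have hval : ∀ v, (f v - a 0).val ≤ 3 := by
      intro v
      have h1 : f v ∈ L 0 := by rw [huni 0 v]; exact hfL v
      rw [ha 0] at h1
      simp only [Set.mem_insert_iff, Set.mem_singleton_iff] at h1
      exact (mem_iff (a 0) (f v)).mp h1
    have hstepq : ∀ t : ℕ, (2 ≤ (f (((t+1 : ℕ) : Fin (2*k+1))) - a 0).val) ↔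
        ¬ (2 ≤ (f (((t : ℕ) : Fin (2*k+1))) - a 0).val) := by
      intro t
      have hcast : ((t + 1 : ℕ) : Fin (2*k+1)) = ((t : ℕ) : Fin (2*k+1)) + 1 := by
        push_cast; ring
      have hadjcyc : (cycleGraph (2*k+1)).Adj (((t : ℕ) : Fin (2*k+1)) + 1)
          ((t : ℕ) : Fin (2*k+1)) := by
        rw [cycleGraph_adj']
        left
        rw [add_sub_cancel_left, hone]
      obtain ⟨hb1, hb2⟩ := adjD _ _ (hfadj _ _ hadjcyc)
      have hd : (f (((t:ℕ):Fin (2*k+1)) + 1) - a 0) - (f ((t:ℕ):Fin (2*k+1)) - a 0)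
          = f (((t:ℕ):Fin (2*k+1)) + 1) - f ((t:ℕ):Fin (2*k+1)) := by ring
      rw [← hd] at hb1 hb2
      have := keyPar _ _ (hval _) (hval _) hb1 hb2
      rw [hcast]
      exact this
    have hpar : ∀ t : ℕ,
        (Even t → ((2 ≤ (f (((t : ℕ) : Fin (2*k+1))) - a 0).val) ↔
          (2 ≤ (f ((0 : Fin (2*k+1))) - a 0).val))) ∧
        (Odd t → ((2 ≤ (f (((t : ℕ) : Fin (2*k+1))) - a 0).val) ↔
          ¬ (2 ≤ (f ((0 : Fin (2*k+1))) - a 0).val))) := by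
      intro t
      induction t with
      | zero => simp
      | succ t ih =>
        constructor
        · intro hev
          have hod : Odd t := by
            rw [Nat.odd_iff]; rw [Nat.even_iff] at hev; omega
          rw [hstepq t, (ih.2 hod)]
          tauto
        · intro hod
          have hev : Even t := by
            rw [Nat.even_iff]; rw [Nat.odd_iff] at hod; omega
          rw [hstepq t, (ih.1 hev)]
    have hoddn : Odd (2*k+1) := ⟨k, by omega⟩
    have hcastn : ((2*k+1 : ℕ) : Fin (2*k+1)) = 0 := Fin.natCast_self _
    have h1 := (hpar (2*k+1)).2 hoddn
    rw [hcastn] at h1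
    tauto
  · intro hne
    -- find an edge with different lists
    have hex : ∃ i : Fin (2*k+1), a i ≠ a (i + 1) := by
      by_contra hall
      push_neg at hall
      apply hne
      have key : ∀ t : ℕ, a ((t : ℕ) : Fin (2*k+1)) = a 0 := by
        intro t
        induction t with
        | zero => norm_num
        | succ t ih =>
          have hcast : ((t + 1 : ℕ) : Fin (2*k+1)) = ((t : ℕ) : Fin (2*k+1)) + 1 := by
            push_cast; ring
          rw [hcast, ← hall ((t : ℕ) : Fin (2*k+1))]
          exact ih
      intro u v
      rw [ha u, ha v]
      have hu : a u = a v := by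
        conv_lhs => rw [← Fin.cast_val_eq_self u]
        conv_rhs => rw [← Fin.cast_val_eq_self v]
        rw [key, key]
      rw [hu]
    obtain ⟨i, hi⟩ := hex
    set b : ℕ → ZMod 7 := fun t => a (i + 1 + ((t : ℕ) : Fin (2*k+1))) with hb
    obtain ⟨s, hsR, hsound⟩ := path_main b (2*k) (by omega)
    have hlast : ((2*k : ℕ) : Fin (2*k+1)) = Fin.last (2*k) := by
      apply Fin.ext
      rw [Fin.val_natCast, Fin.val_last]
      exact Nat.mod_eq_of_lt (by omega)
    have hm1 : ((2*k : ℕ) : Fin (2*k+1)) + 1 = 0 := by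
      rw [hlast]; exact Fin.last_add_one _
    have hmcast : i + 1 + ((2*k : ℕ) : Fin (2*k+1)) = i := by
      calc i + 1 + ((2*k : ℕ) : Fin (2*k+1))
          = i + (((2*k : ℕ) : Fin (2*k+1)) + 1) := by ring
        _ = i := by rw [hm1, add_zero]
    have hb0 : b 0 = a (i + 1) := by simp [hb]
    have hbm : b (2*k) = a i := by rw [hb]; simp only [hmcast]
    have hD : b 0 - b (2*k) ≠ 0 := by
      rw [hb0, hbm]
      exact sub_ne_zero.mpr (Ne.symm hi)
    obtain ⟨e, g, hmemg, hrel⟩ := fact3 s hsR _ hD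
    obtain ⟨gf, hgf0, hgfm, hmemb, hadj⟩ := hsound e g hmemg
    refine ⟨fun v => gf ((v - (i + 1)).val), ?_, ?_⟩
    · intro v
      have ht : (v - (i + 1)).val ≤ 2*k := by
        have := (v - (i + 1)).isLt
        omega
      have hbt : b ((v - (i + 1)).val) = a v := by
        rw [hb]
        simp only
        congr 1
        rw [Fin.cast_val_eq_self]
        ring
      have hmm := hmemb ((v - (i + 1)).val) ht
      rw [hbt] at hmm
      rw [ha v]
      simp only [Set.mem_insert_iff, Set.mem_singleton_iff]
      exact (mem_iff (a v) _).mpr hmm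
    · -- adjacency
      have main : ∀ v : Fin (2*k+1), (circClique 7 2).Adj (gf (((v + 1) - (i + 1)).val))
          (gf ((v - (i + 1)).val)) := by
        intro v
        by_cases hcase : (v - (i + 1)).val < 2*k
        · have hval1 : (((v + 1) - (i + 1))).val = (v - (i + 1)).val + 1 := by
            have hx : (v + 1) - (i + 1) = (v - (i + 1)) + 1 := by ring
            rw [hx, Fin.val_add_one]
            have hne' : (v - (i + 1)) ≠ Fin.last (2 * k) := by
              intro hlast'
              have := congrArg Fin.val hlast'
              rw [Fin.val_last] at this
              omega
            simp [hne']
          rw [hval1]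
          obtain ⟨ha1, ha2⟩ := hadj _ hcase
          exact adjC _ _ ha1 ha2
        · have htm : (v - (i + 1)).val = 2*k := by
            have := (v - (i + 1)).isLt
            omega
          have hveq : v = i := by
            have hvv : v - (i + 1) = Fin.last (2*k) := by
              apply Fin.ext
              rw [Fin.val_last, htm]
            have hv : v = (i + 1) + (v - (i + 1)) := by ring
            rw [hv, hvv, ← hlast, hmcast]
          have hval0 : (((v + 1) - (i + 1))).val = 0 := by
            rw [hveq]
            simp
          rw [hval0, htm]
          have hdiff : gf 0 - gf (2*k) =
              (b 0 - b (2*k)) + ((e.val : ZMod 7)) - ((g.val : ZMod 7)) := by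
            rw [hgf0, hgfm]; ring
          obtain ⟨hr1, hr2⟩ := relZ hrel
          rw [← hdiff] at hr1 hr2
          exact adjC _ _ hr1 hr2
      intro u v huv
      rw [cycleGraph_adj'] at huv
      rcases huv with h1 | h1
      · have hu : u = v + 1 := by
          have h2 : u - v = 1 := by
            apply Fin.ext
            rw [hone]
            exact h1
          rw [← h2]; ring
        rw [hu]
        exact main v
      · have hv : v = u + 1 := by
          have h2 : v - u = 1 := by
            apply Fin.ext
            rw [hone]
            exact h1
          rw [← h2]; ring
        rw [hv]
        exact (circClique 7 2).symm.symm _ _ (main u)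
end

section
/- Let n ≥ 2 and let P be the path with vertices v_1, …, v_n (edges v_i v_{i+1}). Let L be a list assignment of subsets of ZMod 7 such that L(v_1) is an interval of ZMod 7 with |L(v_1)| ≥ 2, L(v_n) is an interval of ZMod 7 with |L(v_n)| ≥ 3, and L(v_i) is a 4-interval for every internal vertex (1 < i < n). Then P admits an L-(7,2)-colouring. -/
open SimpleGraph

/-- The interval `{a, a+1, …, a+s-1}` of colours in `ZMod 7`. -/
def circInterval (a : ZMod 7) (s : ℕ) : Set (ZMod 7) :=
  {x | ∃ i : ℕ, i < s ∧ x = a + (i : ZMod 7)}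

lemma mem_circInterval_of_val {a x : ZMod 7} {s : ℕ} (h : (x - a).val < s) :
    x ∈ circInterval a s :=
  ⟨(x - a).val, h, by rw [ZMod.natCast_val, ZMod.cast_id]; ring⟩

instance : DecidableRel (circClique 7 2).Adj := fun i j =>
  inferInstanceAs (Decidable (i ≠ j ∧ (2 ≤ (i - j).val ∧ (i - j).val ≤ 7 - 2)
    ∧ (2 ≤ (j - i).val ∧ (j - i).val ≤ 7 - 2)))

/-- Colourability of the prefix of the path up to index `i`, ending with colour `x`. -/
def GoodP (n : ℕ) (L : Fin n → Set (ZMod 7)) (i : ℕ) (x : ZMod 7) : Prop :=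
  ∃ f : Fin n → ZMod 7,
    (∀ j : Fin n, (j : ℕ) ≤ i → f j ∈ L j) ∧
    (∀ j k : Fin n, (j : ℕ) + 1 = (k : ℕ) → (k : ℕ) ≤ i →
      (circClique 7 2).Adj (f j) (f k)) ∧
    (∀ j : Fin n, (j : ℕ) = i → f j = x)

lemma good_extend {n : ℕ} {L : Fin n → Set (ZMod 7)} {i : ℕ} {x y : ZMod 7}
    (hi1 : i + 1 < n) (hadj : (circClique 7 2).Adj x y)
    (hy : y ∈ L ⟨i + 1, hi1⟩) (hg : GoodP n L i x) : GoodP n L (i + 1) y := by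
  obtain ⟨f, hmem, hadjf, hval⟩ := hg
  refine ⟨fun j => if (j : ℕ) = i + 1 then y else f j, ?_, ?_, ?_⟩
  · intro j hj
    dsimp only
    by_cases h : (j : ℕ) = i + 1
    · have hje : j = ⟨i + 1, hi1⟩ := Fin.ext h
      rw [if_pos h, hje]
      exact hy
    · rw [if_neg h]
      exact hmem j (by omega)
  · intro j k hjk hk
    dsimp only
    have hjne : (j : ℕ) ≠ i + 1 := by omega
    by_cases h : (k : ℕ) = i + 1
    · rw [if_pos h, if_neg hjne, hval j (by omega)]
      exact hadj
    · rw [if_neg h, if_neg hjne]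
      exact hadjf j k hjk (by omega)
  · intro j hj
    dsimp only
    rw [if_pos hj]

lemma val_one_lt {s : ℕ} (hs : 2 ≤ s) : ((1 : ZMod 7)).val < s := by
  have : ((1 : ZMod 7)).val = 1 := rfl
  omega

lemma step_lemma : ∀ x b d : ZMod 7, d = 1 ∨ d = 3 →
    ∃ y e : ZMod 7, (e = 1 ∨ e = 3) ∧ (y - b).val < 4 ∧ (y + e - b).val < 4 ∧
      ((circClique 7 2).Adj x y ∨ (circClique 7 2).Adj (x + d) y) ∧
      ((circClique 7 2).Adj x (y + e) ∨ (circClique 7 2).Adj (x + d) (y + e)) := by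
  decide

lemma last_lemma : ∀ x c d : ZMod 7, d = 1 ∨ d = 3 →
    ∃ y : ZMod 7, (y - c).val < 3 ∧
      ((circClique 7 2).Adj x y ∨ (circClique 7 2).Adj (x + d) y) := by
  decide

/-- A path whose first vertex has an interval list of size ≥ 2, last vertex an interval
list of size ≥ 3, and internal vertices 4-interval lists, admits a list
`(7,2)`-colouring. -/
theorem stmt_11 (n : ℕ) (hn : 2 ≤ n) (L : Fin n → Set (ZMod 7))
    (hfirst : ∃ (a : ZMod 7) (s : ℕ), 2 ≤ s ∧ L ⟨0, by omega⟩ = circInterval a s)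
    (hlast : ∃ (a : ZMod 7) (s : ℕ), 3 ≤ s ∧ L ⟨n - 1, by omega⟩ = circInterval a s)
    (hinternal : ∀ i : Fin n, (i : ℕ) ≠ 0 → (i : ℕ) ≠ n - 1 →
      ∃ a : ZMod 7, L i = circInterval a 4) :
    ∃ f : Fin n → ZMod 7, (∀ v, f v ∈ L v) ∧
      ∀ u v, (pathGraph n).Adj u v → (circClique 7 2).Adj (f u) (f v) := by
  obtain ⟨a1, s1, hs1, hL1⟩ := hfirst
  obtain ⟨an, sn, hsn, hLn⟩ := hlast
  have base : ∀ x : ZMod 7, x ∈ L ⟨0, by omega⟩ → GoodP n L 0 x := by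
    intro x hx
    refine ⟨fun _ => x, ?_, ?_, fun _ _ => rfl⟩
    · intro j hj
      have hje : j = ⟨0, by omega⟩ := Fin.ext (show (j : ℕ) = 0 by omega)
      rw [hje]
      exact hx
    · intro j k hjk hk
      omega
  have inv : ∀ i : ℕ, i ≤ n - 2 → ∃ x d : ZMod 7, (d = 1 ∨ d = 3) ∧
      GoodP n L i x ∧ GoodP n L i (x + d) := by
    intro i
    induction i with
    | zero =>
      intro _
      refine ⟨a1, 1, Or.inl rfl, base a1 ?_, base (a1 + 1) ?_⟩
      · rw [hL1]
        refine mem_circInterval_of_val ?_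
        rw [sub_self]
        have : ((0 : ZMod 7)).val = 0 := rfl
        omega
      · rw [hL1]
        refine mem_circInterval_of_val ?_
        rw [show a1 + 1 - a1 = (1 : ZMod 7) by ring]
        exact val_one_lt hs1
    | succ i ih =>
      intro hi
      obtain ⟨x, d, hd, hgx, hgxd⟩ := ih (by omega)
      have hi1 : i + 1 < n := by omega
      obtain ⟨b, hLb⟩ := hinternal ⟨i + 1, hi1⟩ (by simp) (by simp; omega)
      obtain ⟨y, e, he, hy4, hye4, hady, hadye⟩ := step_lemma x b d hd
      have hymem : y ∈ L ⟨i + 1, hi1⟩ := by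
        rw [hLb]; exact mem_circInterval_of_val hy4
      have hyemem : y + e ∈ L ⟨i + 1, hi1⟩ := by
        rw [hLb]; exact mem_circInterval_of_val hye4
      refine ⟨y, e, he, ?_, ?_⟩
      · rcases hady with h | h
        · exact good_extend hi1 h hymem hgx
        · exact good_extend hi1 h hymem hgxd
      · rcases hadye with h | h
        · exact good_extend hi1 h hyemem hgx
        · exact good_extend hi1 h hyemem hgxd
  obtain ⟨x, d, hd, hgx, hgxd⟩ := inv (n - 2) le_rfl
  obtain ⟨y, hy3, hady⟩ := last_lemma x an d hd
  have hlt : n - 2 + 1 < n := by omega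
  have hymem : y ∈ L ⟨n - 2 + 1, hlt⟩ := by
    have hidx : (⟨n - 2 + 1, hlt⟩ : Fin n) = ⟨n - 1, by omega⟩ :=
      Fin.ext (show n - 2 + 1 = n - 1 by omega)
    rw [hidx, hLn]
    exact mem_circInterval_of_val (by omega)
  have hfinal : GoodP n L (n - 2 + 1) y := by
    rcases hady with h | h
    · exact good_extend hlt h hymem hgx
    · exact good_extend hlt h hymem hgxd
  obtain ⟨f, hmem, hadjf, _⟩ := hfinal
  refine ⟨f, fun v => hmem v (by omega), ?_⟩
  intro u v huv
  rw [pathGraph_adj] at huv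
  rcases huv with h | h
  · exact hadjf u v h (by omega)
  · exact (hadjf v u h (by omega)).symm
end

section
/- Let G be a finite simple 4-critical graph with no (7,2)-colouring. If D_3(G) contains no cycle, then every connected component of D_3(G) either is isomorphic to a path (possibly a single vertex) or has at most four vertices. -/
open SimpleGraph

lemma circ_adj_of {x y : ZMod 7}
    (h : y - x = 2 ∨ y - x = 3 ∨ y - x = 4 ∨ y - x = 5) :
    (circClique 7 2).Adj x y := by
  have hy : y = x + (y - x) := by ring
  have key : ∀ d : ZMod 7, (d = 2 ∨ d = 3 ∨ d = 4 ∨ d = 5) →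
      (circClique 7 2).Adj x (x + d) := by
    intro d hd
    have h1 : x + d - x = d := by ring
    have h2 : x - (x + d) = -d := by ring
    refine (⟨?_, ?_, ?_⟩ : _ ∧ _ ∧ _)
    · intro he
      have hd0 : d = 0 := left_eq_add.mp he
      rcases hd with h|h|h|h <;> rw [h] at hd0 <;> exact absurd hd0 (by decide)
    · rw [h2]
      rcases hd with h|h|h|h <;> rw [h] <;> exact ⟨by decide, by decide⟩
    · rw [h1]
      rcases hd with h|h|h|h <;> rw [h] <;> exact ⟨by decide, by decide⟩
  rw [hy]
  exact key _ h

/-- Core construction: a 3-colouring of `G - uv` with both endpoints coloured 0 and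
no "directed 3-walk" from `u` to `v` yields a (7,2)-colouring of `G`. -/
lemma hasCircColoring_of_no_three_walk {V : Type*} (G : SimpleGraph V) (u v : V)
    (huv : G.Adj u v) (φ : V → ZMod 3)
    (hproper : ∀ a b, (G.deleteEdges {s(u, v)}).Adj a b → φ a ≠ φ b)
    (hpu : φ u = 0) (hpv : φ v = 0)
    (h3 : ¬ ∃ a b, (G.deleteEdges {s(u, v)}).Adj u a ∧ (G.deleteEdges {s(u, v)}).Adj a b ∧
      (G.deleteEdges {s(u, v)}).Adj b v ∧ φ a = 1 ∧ φ b = 2) :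
    HasCircColoring G 7 2 := by
  classical
  set D := G.deleteEdges {s(u, v)} with hD
  -- reachability levels
  set N1 : V → Prop := fun t => D.Adj u t ∧ φ t = 1 with hN1
  set N2 : V → Prop := fun t => (∃ a, N1 a ∧ D.Adj a t) ∧ φ t = 2 with hN2
  set A0 : V → Prop := fun t => t = u ∨ N1 t ∨ N2 t with hA0
  set Wc : V → Prop := fun t => (∃ b, N2 b ∧ D.Adj b t) ∧ φ t = 0 with hWc
  set Xc : V → Prop := fun t => (∃ w, Wc w ∧ D.Adj w t) ∧ φ t = 1 with hXc
  set Yc : V → Prop := fun t => (∃ x, Xc x ∧ D.Adj x t) ∧ φ t = 2 with hYc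
  set s : V → ℤ := fun t => if A0 t then 1 else if Wc t ∨ Xc t ∨ Yc t then 0 else -1 with hs
  have s_bound : ∀ t, s t = -1 ∨ s t = 0 ∨ s t = 1 := by
    intro t; simp only [hs]; split_ifs <;> tauto
  -- colours of the classes
  have colA0 : ∀ t, A0 t → (φ t = 0 → t = u) ∧ (φ t = 1 → N1 t) ∧ (φ t = 2 → N2 t) := by
    intro t ht
    rcases ht with rfl | hn1 | hn2
    · exact ⟨fun _ => rfl, fun h1 => absurd (hpu ▸ h1) (by decide),
        fun h2 => absurd (hpu ▸ h2) (by decide)⟩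
    · refine ⟨fun h0 => absurd (hn1.2 ▸ h0) (by decide), fun _ => hn1,
        fun h2 => absurd (hn1.2 ▸ h2) (by decide)⟩
    · exact ⟨fun h0 => absurd (hn2.2 ▸ h0) (by decide),
        fun h1 => absurd (hn2.2 ▸ h1) (by decide), fun _ => hn2⟩
  -- monotonicity of s along arcs
  have hstep : ∀ a b, D.Adj a b → φ b = φ a + 1 →
      (φ a = 2 → s a - 1 ≤ s b) ∧ (φ a ≠ 2 → s a ≤ s b) := by
    intro a b hab hfb
    have hcol : φ a = 0 ∨ φ a = 1 ∨ φ a = 2 := by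
      revert hfb; generalize φ a = x; generalize φ b = y; revert x y; decide
    by_cases hA : A0 a
    · have hsa : s a = 1 := by simp only [hs]; rw [if_pos hA]
      rcases hcol with h0 | h1 | h2
      · -- a = u, b gets colour 1, so N1 b
        have hau : a = u := (colA0 a hA).1 h0
        have hb1 : φ b = 1 := by rw [hfb, h0]; decide
        have : A0 b := Or.inr (Or.inl ⟨hau ▸ hab, hb1⟩)
        have hsb : s b = 1 := by simp only [hs]; rw [if_pos this]
        constructor
        · intro h2'; rw [h0] at h2'; exact absurd h2' (by decide)
        · intro _; rw [hsa, hsb]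
      · have hn1 : N1 a := (colA0 a hA).2.1 h1
        have hb2 : φ b = 2 := by rw [hfb, h1]; decide
        have : A0 b := Or.inr (Or.inr ⟨⟨a, hn1, hab⟩, hb2⟩)
        have hsb : s b = 1 := by simp only [hs]; rw [if_pos this]
        constructor
        · intro h2'; rw [h1] at h2'; exact absurd h2' (by decide)
        · intro _; rw [hsa, hsb]
      · have hn2 : N2 a := (colA0 a hA).2.2 h2
        have hb0 : φ b = 0 := by rw [hfb, h2]; decide
        have hwb : Wc b := ⟨⟨a, hn2, hab⟩, hb0⟩
        have hsb : 0 ≤ s b := by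
          simp only [hs]; split_ifs with h' h''
          · norm_num
          · norm_num
          · exact absurd (Or.inl hwb) h''
        constructor
        · intro _; omega
        · intro hne; exact absurd h2 hne
    · by_cases hM : Wc a ∨ Xc a ∨ Yc a
      · have hsa : s a = 0 := by simp only [hs]; rw [if_neg hA, if_pos hM]
        rcases hcol with h0 | h1 | h2
        · -- a in Wc (colours rule out Xc, Yc)
          have hwa : Wc a := by
            rcases hM with h | h | h
            · exact h
            · exact absurd (h.2 ▸ h0) (by decide)
            · exact absurd (h.2 ▸ h0) (by decide)
          have hb1 : φ b = 1 := by rw [hfb, h0]; decide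
          have hxb : Xc b := ⟨⟨a, hwa, hab⟩, hb1⟩
          have hsb : 0 ≤ s b := by
            simp only [hs]; split_ifs with h' h''
            · norm_num
            · norm_num
            · exact absurd (Or.inr (Or.inl hxb)) h''
          constructor
          · intro h2'; rw [h0] at h2'; exact absurd h2' (by decide)
          · intro _; omega
        · have hxa : Xc a := by
            rcases hM with h | h | h
            · exact absurd (h.2 ▸ h1) (by decide)
            · exact h
            · exact absurd (h.2 ▸ h1) (by decide)
          have hb2 : φ b = 2 := by rw [hfb, h1]; decide
          have hyb : Yc b := ⟨⟨a, hxa, hab⟩, hb2⟩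
          have hsb : 0 ≤ s b := by
            simp only [hs]; split_ifs with h' h''
            · norm_num
            · norm_num
            · exact absurd (Or.inr (Or.inr hyb)) h''
          constructor
          · intro h2'; rw [h1] at h2'; exact absurd h2' (by decide)
          · intro _; omega
        · -- Yc a, wrap arc: only need s b ≥ -1
          have := s_bound b
          constructor
          · intro _; omega
          · intro hne; exact absurd h2 hne
      · have hsa : s a = -1 := by simp only [hs]; rw [if_neg hA, if_neg hM]
        have := s_bound b
        exact ⟨fun _ => by omega, fun _ => by omega⟩
  -- values at u and v
  have hsu : s u = 1 := by
    simp only [hs]; rw [if_pos (Or.inl rfl)]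
  have hsv : s v = -1 := by
    have hAv : ¬ A0 v := by
      rintro (rfl | hn1 | hn2)
      · exact huv.ne rfl
      · exact absurd (hn1.2 ▸ hpv) (by decide)
      · exact absurd (hn2.2 ▸ hpv) (by decide)
    have hMv : ¬ (Wc v ∨ Xc v ∨ Yc v) := by
      rintro (hw | hx | hy)
      · obtain ⟨⟨b, ⟨⟨a, ⟨hua, hfa⟩, hab⟩, hfb⟩, hbv⟩, -⟩ := hw
        exact h3 ⟨a, b, hua, hab, hbv, hfa, hfb⟩
      · exact absurd (hx.2 ▸ hpv) (by decide)
      · exact absurd (hy.2 ▸ hpv) (by decide)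
    simp only [hs]; rw [if_neg hAv, if_neg hMv]
  -- the circular colouring
  set ψ : V → ZMod 7 := fun t => ((2 * (φ t).val + s t : ℤ) : ZMod 7) with hψ
  refine ⟨⟨ψ, ?_⟩⟩
  intro a b hab
  show (circClique 7 2).Adj (ψ a) (ψ b)
  -- key: handle an arc with φ b = φ a + 1 in D
  have main : ∀ a b, D.Adj a b → φ b = φ a + 1 → (circClique 7 2).Adj (ψ a) (ψ b) := by
    intro a b hab hfb
    have hst := hstep a b hab hfb
    have hsb := s_bound b
    have hsa := s_bound a
    have hvals : ((φ a).val = 0 ∧ (φ b).val = 1) ∨ ((φ a).val = 1 ∧ (φ b).val = 2) ∨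
        ((φ a).val = 2 ∧ (φ b).val = 0) := by
      revert hfb; generalize φ a = x; generalize φ b = y; revert x y; decide
    have hdiff : (ψ b - ψ a) = ((2 * (φ b).val + s b - (2 * (φ a).val + s a) : ℤ) : ZMod 7) := by
      simp only [hψ]; push_cast; ring
    set t : ℤ := 2 * (φ b).val + s b - (2 * (φ a).val + s a) with ht
    have htv : t = 2 ∨ t = 3 ∨ t = 4 ∨ t = -2 ∨ t = -3 ∨ t = -4 ∨ t = -5 := by
      rcases hvals with ⟨ha, hb⟩ | ⟨ha, hb⟩ | ⟨ha, hb⟩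
      · have h2 : φ a ≠ 2 := by
          intro h; rw [h] at ha; exact absurd ha (by decide)
        have := hst.2 h2; omega
      · have h2 : φ a ≠ 2 := by
          intro h; rw [h] at ha; exact absurd ha (by decide)
        have := hst.2 h2; omega
      · have h2 : φ a = 2 := by
          revert ha; generalize φ a = x; revert x; decide
        have := hst.1 h2; omega
    have hgood : ψ b - ψ a = 2 ∨ ψ b - ψ a = 3 ∨ ψ b - ψ a = 4 ∨ ψ b - ψ a = 5 := by
      rcases htv with h|h|h|h|h|h|h <;> rw [hdiff, h] <;>
        simp only [Int.cast_ofNat, Int.cast_neg] <;> norm_num <;> decide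
    exact circ_adj_of hgood
  by_cases hdel : s(a, b) = s(u, v)
  · have hψu : ψ u = 1 := by
      simp only [hψ, hpu, hsu]; norm_num
    have hψv : ψ v = 6 := by
      simp only [hψ, hpv, hsv]; norm_num; decide
    rcases Sym2.eq_iff.mp hdel with ⟨rfl, rfl⟩ | ⟨rfl, rfl⟩
    · refine circ_adj_of ?_
      rw [hψu, hψv]; right; right; right; decide
    · refine circ_adj_of ?_
      rw [hψu, hψv]; left; decide
  · have hDab : D.Adj a b := by
      rw [hD, deleteEdges_adj]
      exact ⟨hab, by simpa using hdel⟩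
    have hne := hproper a b hDab
    have hcases : φ b = φ a + 1 ∨ φ a = φ b + 1 := by
      revert hne; generalize φ a = x; generalize φ b = y; revert x y; decide
    rcases hcases with h | h
    · exact main a b hDab h
    · exact (main b a hDab.symm h).symm


section helpers
variable {W : Type*} (H : SimpleGraph W)

lemma exists_walk_of_chain : ∀ (l : List W) (a b : W), List.Chain H.Adj a l →
    (a :: l).getLast (List.cons_ne_nil a l) = b → ∃ w : H.Walk a b, w.support = a :: l := by
  intro l
  induction l with
  | nil =>
    intro a b _ hlast
    simp only [List.getLast_singleton] at hlast
    subst hlast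
    exact ⟨Walk.nil, by simp⟩
  | cons c l' ih =>
    intro a b hch hlast
    rw [List.Chain, List.chain_cons] at hch
    rw [List.getLast_cons (List.cons_ne_nil c l')] at hlast
    obtain ⟨w', hw'⟩ := ih c b hch.2 hlast
    exact ⟨Walk.cons hch.1 w', by simp [hw']⟩

lemma chain_eq_pair (hac : H.IsAcyclic) (l : List W) (a b : W)
    (hch : List.Chain H.Adj a l) (hlast : (a :: l).getLast (List.cons_ne_nil a l) = b)
    (hnd : (a :: l).Nodup) (hadj : H.Adj a b) : (a :: l).length = 2 := by
  obtain ⟨w1, hw1⟩ := exists_walk_of_chain H l a b hch hlast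
  have hp1 : w1.IsPath := by rw [Walk.isPath_def, hw1]; exact hnd
  have hne : a ≠ b := hadj.ne
  have hp2 : (Walk.cons hadj (Walk.nil : H.Walk b b)).IsPath := by
    rw [Walk.isPath_def]
    simp [hne]
  have heq := isAcyclic_iff_path_unique.mp hac ⟨w1, hp1⟩ ⟨Walk.cons hadj Walk.nil, hp2⟩
  have hsup : w1.support = (Walk.cons hadj (Walk.nil : H.Walk b b)).support := by
    rw [show w1 = (⟨w1, hp1⟩ : H.Path a b).1 from rfl, heq]
  rw [← hw1, hsup]
  simp

/-- no chords in an acyclic graph along a chained nodup list -/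
lemma no_chord (hac : H.IsAcyclic) (l : List W) (hch : List.Chain' H.Adj l)
    (hnd : l.Nodup) {i j : ℕ} (hij : i < j) (hj : j < l.length)
    (hadj : H.Adj (l[i]'(by omega)) (l[j]'hj)) : j = i + 1 := by
  set L : List W := (l.drop i).take (j - i + 1) with hL
  have hlenL : L.length = j - i + 1 := by
    simp [hL]; omega
  have hgetL : ∀ (k : ℕ) (hk : k < L.length), L[k]'hk = l[i+k]'(by simp [hL] at hk; omega) := by
    intro k hk
    show ((l.drop i).take (j - i + 1))[k]'(hL ▸ hk) = _
    rw [List.getElem_take, ← List.getElem_drop']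
  have hLne : L ≠ [] := by
    intro h; rw [h] at hlenL; simp at hlenL
  have hndL : L.Nodup := ((List.take_sublist _ _).trans (List.drop_sublist _ _)).nodup hnd
  have hchL : L.Chain' H.Adj := by
    rw [List.Chain', List.isChain_iff_getElem]
    intro k hk
    have h1 := hgetL k (by omega)
    have h2 := hgetL (k+1) (by omega)
    rw [h1, h2]
    have := List.isChain_iff_getElem.mp hch (i+k) (by omega)
    exact this
  have hcons : L.head hLne :: L.tail = L := List.cons_head_tail hLne
  have hchain : List.Chain H.Adj (L.head hLne) L.tail := by
    have := hchL
    rw [← hcons] at this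
    exact this
  have hhead : L.head hLne = l[i]'(by omega) := by
    rw [List.head_eq_getElem]
    have := hgetL 0 (by omega)
    simpa using this
  have hlast : (L.head hLne :: L.tail).getLast (List.cons_ne_nil _ _) = l[j]'hj := by
    have e1 : (L.head hLne :: L.tail).getLast (List.cons_ne_nil _ _) = L.getLast hLne := by
      congr 1
    rw [e1, List.getLast_eq_getElem]
    have := hgetL (L.length - 1) (by omega)
    rw [this]
    congr 1
    omega
  have hkey := chain_eq_pair H hac L.tail (L.head hLne) (l[j]'hj) hchain hlast
    (by rw [hcons]; exact hndL) (by rw [hhead]; exact hadj)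
  have : L.length = 2 := by
    rw [← hcons]; simpa using hkey
  omega

end helpers

section pathiso
variable {W : Type*} [Fintype W] (H : SimpleGraph W)

lemma exists_crossing {S : Set W} : ∀ {z a : W} (q : H.Walk z a), z ∉ S → a ∈ S →
    ∃ z' m, z' ∉ S ∧ m ∈ S ∧ H.Adj z' m ∧ z' ∈ q.support ∧ m ∈ q.support := by
  intro z a q
  induction q with
  | nil => intro hz ha; exact absurd ha hz
  | @cons x y _ hadj q' ih =>
    intro hz ha
    by_cases hy : y ∈ S
    · exact ⟨x, y, hz, hy, hadj, by simp, by simp⟩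
    · obtain ⟨z', m, h1, h2, h3, h4, h5⟩ := ih hy ha
      exact ⟨z', m, h1, h2, h3, by simp [h4], by simp [h5]⟩

lemma component_iso_path (hac : H.IsAcyclic) (c : H.ConnectedComponent)
    (hdeg : ∀ t ∈ c.supp, ∀ a b z : W, H.Adj t a → H.Adj t b → H.Adj t z →
      a = b ∨ a = z ∨ b = z) :
    ∃ n : ℕ, Nonempty ((H.induce c.supp) ≃g pathGraph n) := by
  classical
  obtain ⟨v0, hv0⟩ := c.exists_rep
  have hv0s : v0 ∈ c.supp := by rw [ConnectedComponent.mem_supp_iff]; exact hv0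
  have hsupp_closed : ∀ {a t : W}, a ∈ c.supp → ∀ (q : H.Walk a t), ∀ x ∈ q.support,
      x ∈ c.supp := by
    intro a t ha q x hx
    rw [ConnectedComponent.mem_supp_iff] at ha ⊢
    have : H.Reachable a x := ((q.takeUntil x hx)).reachable
    rw [← ConnectedComponent.sound this]; exact ha
  set P : ℕ → Prop := fun n => ∃ (a b : W) (p : H.Walk a b), p.IsPath ∧ a ∈ c.supp ∧ p.length = n
    with hP
  have hP0 : P 0 := ⟨v0, v0, Walk.nil, by simp, hv0s, rfl⟩
  set n0 : ℕ := Nat.findGreatest P (Fintype.card W) with hn0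
  have hPn0 : P n0 := Nat.findGreatest_spec (Nat.zero_le _) hP0
  obtain ⟨a, b, p, hpath, has, hlen⟩ := hPn0
  have hmax : ∀ (a' b' : W) (p' : H.Walk a' b'), p'.IsPath → a' ∈ c.supp → p'.length ≤ n0 := by
    intro a' b' p' hp' ha'
    exact Nat.le_findGreatest (le_of_lt hp'.length_lt) ⟨a', b', p', hp', ha', rfl⟩
  have hsub : ∀ x ∈ p.support, x ∈ c.supp := hsupp_closed has p
  set l : List W := p.support with hl
  have hchain : List.Chain' H.Adj l := p.isChain_adj_support
  have hnd : l.Nodup := (Walk.isPath_def _).mp hpath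
  have hlenl : l.length = p.length + 1 := Walk.length_support p
  have hsup2 : ∀ x ∈ c.supp, x ∈ l := by
    by_contra hcon
    push_neg at hcon
    obtain ⟨z, hzs, hznot⟩ := hcon
    have hreach : H.Reachable z a := by
      rw [ConnectedComponent.mem_supp_iff] at hzs has
      exact ConnectedComponent.exact (hzs.trans has.symm)
    obtain ⟨q⟩ := hreach
    obtain ⟨z', m, hz'n, hm, hadj, hz'q, hmq⟩ :=
      exists_crossing H (S := {x | x ∈ l}) q hznot p.start_mem_support
    have hz's : z' ∈ c.supp := hsupp_closed hzs q z' hz'q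
    have hmem : m ∈ l := hm
    obtain ⟨⟨i, hi⟩, hgeti⟩ := List.get_of_mem hmem
    simp only [List.get_eq_getElem] at hgeti
    by_cases hi0 : i = 0
    · have hma : m = a := by
        rw [← hgeti]
        subst hi0
        have hcons : l = a :: p.support.tail := by
          rw [hl]; exact Walk.support_eq_cons p
        rw [List.getElem_of_eq hcons]
        rfl
      have hadj' : H.Adj z' a := hma ▸ hadj
      have hnp : (Walk.cons hadj' p).IsPath := hpath.cons (by simpa [hl] using hz'n)
      have := hmax z' b (Walk.cons hadj' p) hnp hz's
      simp only [Walk.length_cons] at this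
      omega
    · by_cases hilast : i = l.length - 1
      · have hmb : m = b := by
          rw [← hgeti]
          have h1 : l[i]'hi = l.getLast (by rw [hl]; simp) := by
            rw [List.getLast_eq_getElem]
            congr 1
          rw [h1]
          exact Walk.getLast_support p
        have hadj' : H.Adj z' b := hmb ▸ hadj
        have hnp : (Walk.cons hadj' p.reverse).IsPath :=
          hpath.reverse.cons (by simpa [Walk.support_reverse, hl] using hz'n)
        have := hmax z' a _ hnp hz's
        simp only [Walk.length_cons, Walk.length_reverse] at this
        omega
      · obtain ⟨k, rfl⟩ : ∃ k, i = k + 1 := ⟨i - 1, by omega⟩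
        have hk2 : k + 1 + 1 < l.length := by omega
        have hk0 : k < l.length := by omega
        have hprev : H.Adj (l[k]'hk0) (l[k+1]'hi) := by
          have := List.isChain_iff_getElem.mp hchain k (by omega)
          simpa using this
        have hnext : H.Adj (l[k+1]'hi) (l[k+1+1]'hk2) := by
          have := List.isChain_iff_getElem.mp hchain (k+1) (by omega)
          simpa using this
        have hms : m ∈ c.supp := hsub m hmem
        have h3 := hdeg m hms (l[k]'hk0) (l[k+1+1]'hk2) z'
          (hgeti ▸ hprev.symm) (hgeti ▸ hnext) (hgeti ▸ hadj.symm)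
        rcases h3 with h | h | h
        · exact absurd (hnd.getElem_inj_iff.mp h) (by omega)
        · exact hz'n (h ▸ List.getElem_mem hk0)
        · exact hz'n (h ▸ List.getElem_mem hk2)
  refine ⟨l.length, ⟨?_⟩⟩
  set f : Fin l.length → ↑(c.supp) :=
    fun i => ⟨l[i.val]'i.isLt, hsub _ (List.getElem_mem i.isLt)⟩ with hf
  have hinj : Function.Injective f := by
    intro i j hij
    have : l[i.val]'i.isLt = l[j.val]'j.isLt := congrArg Subtype.val hij
    exact Fin.ext (hnd.getElem_inj_iff.mp this)
  have hsurj : Function.Surjective f := by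
    intro s
    obtain ⟨⟨k, hk⟩, hgk⟩ := List.get_of_mem (hsup2 s.val s.prop)
    simp only [List.get_eq_getElem] at hgk
    exact ⟨⟨k, hk⟩, Subtype.ext (by simpa [hf] using hgk)⟩
  have mri : ∀ (i j : Fin l.length),
      (H.induce c.supp).Adj (f i) (f j) ↔ (pathGraph l.length).Adj i j := by
    intro i j
    constructor
    · intro h
      have hA : H.Adj (l[i.val]'i.isLt) (l[j.val]'j.isLt) := h
      rw [pathGraph_adj]
      rcases lt_trichotomy i.val j.val with hlt | heq | hgt
      · left
        exact (no_chord H hac l hchain hnd hlt j.isLt hA).symm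
      · exact absurd (Fin.ext heq : i = j) (by rintro rfl; exact hA.ne rfl)
      · right
        exact (no_chord H hac l hchain hnd hgt i.isLt hA.symm).symm
    · intro h
      rw [pathGraph_adj] at h
      have key : ∀ (i j : Fin l.length), (i.val + 1 = j.val) →
          (H.induce c.supp).Adj (f i) (f j) := by
        intro i j hij
        have := List.isChain_iff_getElem.mp hchain i.val (by omega)
        show H.Adj (l[i.val]'i.isLt) (l[j.val]'j.isLt)
        convert this using 2
        omega
      rcases h with h | h
      · exact key i j h
      · exact ((key j i h)).symm
  exact SimpleGraph.Iso.symm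
    { toEquiv := Equiv.ofBijective f ⟨hinj, hsurj⟩
      map_rel_iff' := fun {i j} => mri i j }

end pathiso

section main

variable {V : Type*}

lemma four_nbrs [Fintype V] (G : SimpleGraph V) [DecidableRel G.Adj] {t a b z zz : V}
    (hd : G.degree t = 3) (hab : a ≠ b) (haz : a ≠ z) (hazz : a ≠ zz) (hbz : b ≠ z)
    (hbzz : b ≠ zz) (hzzz : z ≠ zz) (h1 : G.Adj t a) (h2 : G.Adj t b) (h3 : G.Adj t z)
    (h4 : G.Adj t zz) : False := by
  classical
  have hsub : ({a, b, z, zz} : Finset V) ⊆ G.neighborFinset t := by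
    intro s hs
    simp only [Finset.mem_insert, Finset.mem_singleton] at hs
    rcases hs with rfl | rfl | rfl | rfl <;> rw [SimpleGraph.mem_neighborFinset] <;> assumption
  have hcard : ({a, b, z, zz} : Finset V).card = 4 := by
    rw [Finset.card_insert_of_notMem (by simp [hab, haz, hazz]),
      Finset.card_insert_of_notMem (by simp [hbz, hbzz]),
      Finset.card_insert_of_notMem (by simp [hzzz]), Finset.card_singleton]
  have := Finset.card_le_card hsub
  rw [hcard] at this
  have hdeg : (G.neighborFinset t).card = 3 := hd
  omega

lemma config_contradiction [Fintype V] (G : SimpleGraph V) [DecidableRel G.Adj]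
    (hcrit : FourCritical G) (hno : ¬ HasCircColoring G 7 2)
    (hacyc : (G.induce {t | G.degree t = 3}).IsAcyclic)
    (v u x y w : ↑{t | G.degree t = 3})
    (hvu : (G.induce {t | G.degree t = 3}).Adj v u)
    (hvx : (G.induce {t | G.degree t = 3}).Adj v x)
    (hvy : (G.induce {t | G.degree t = 3}).Adj v y)
    (huw : (G.induce {t | G.degree t = 3}).Adj u w)
    (hux : u ≠ x) (huy : u ≠ y) (hxy : x ≠ y) (hwv : w ≠ v) : False := by
  classical
  set H : SimpleGraph ↑{t | G.degree t = 3} := G.induce {t | G.degree t = 3} with hH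
  -- graph-level adjacencies
  have gvu : G.Adj ↑v ↑u := hvu
  have gvx : G.Adj ↑v ↑x := hvx
  have gvy : G.Adj ↑v ↑y := hvy
  have guw : G.Adj ↑u ↑w := huw
  have hdegv : G.degree (↑v : V) = 3 := v.prop
  have hdegu : G.degree (↑u : V) = 3 := u.prop
  -- coercion distinctness
  have cne : ∀ {s t : ↑{t | G.degree t = 3}}, s ≠ t → (↑s : V) ≠ ↑t :=
    fun hst => fun hc => hst (Subtype.coe_injective hc)
  -- the killer: a G-edge from w to an H-neighbour t of v with u ≠ t gives a cycle
  have killer : ∀ t : ↑{t | G.degree t = 3}, H.Adj v t → u ≠ t → G.Adj ↑w ↑t → False := by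
    intro t hvt hut hgwt
    have hwt : H.Adj w t := hgwt
    have hchain : List.Chain H.Adj w [u, v, t] := by
      refine List.Chain.cons huw.symm (List.Chain.cons hvu.symm (List.Chain.cons hvt ?_))
      exact List.Chain.nil
    have hlast : (w :: [u, v, t]).getLast (List.cons_ne_nil _ _) = t := by simp
    have e1 : w ≠ u := (huw.ne).symm
    have e2 : w ≠ v := hwv
    have e3 : w ≠ t := hwt.ne
    have e4 : u ≠ v := (hvu.ne).symm
    have e5 : u ≠ t := hut
    have e6 : v ≠ t := hvt.ne
    have hnd : (w :: [u, v, t]).Nodup := by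
      simp [e1, e2, e3, e4, e5, e6]
    have := chain_eq_pair H hacyc [u, v, t] w t hchain hlast hnd hwt
    simp at this
  -- set up the 3-colouring of G - uv
  have hedge : s((↑u : V), (↑v : V)) ∈ G.edgeSet := by
    rw [SimpleGraph.mem_edgeSet]; exact gvu.symm
  obtain ⟨φ0⟩ := hcrit.2 _ hedge
  set D : SimpleGraph V := G.deleteEdges {s((↑u : V), ↑v)} with hD
  set φ : V → ZMod 3 := fun t => (show ZMod 3 from φ0 t) - (show ZMod 3 from φ0 ↑u) with hφ
  have hproper : ∀ a b : V, D.Adj a b → φ a ≠ φ b := by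
    intro a b hab h
    exact φ0.valid hab (by
      have : (show ZMod 3 from φ0 a) = (show ZMod 3 from φ0 b) := by
        have := sub_left_inj.mp h
        exact this
      exact this)
  have hφuv : φ0 ↑u = φ0 ↑v := by
    by_contra hneq
    refine hcrit.1 ⟨SimpleGraph.Coloring.mk φ0 ?_⟩
    intro a b hab
    by_cases hdel : s(a, b) = s((↑u : V), ↑v)
    · rcases Sym2.eq_iff.mp hdel with ⟨rfl, rfl⟩ | ⟨rfl, rfl⟩
      · exact hneq
      · exact fun h => hneq h.symm
    · exact φ0.valid (by rw [hD, SimpleGraph.deleteEdges_adj]; exact ⟨hab, by simpa using hdel⟩)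
  have hpu : φ ↑u = 0 := by simp [hφ]; exact sub_self _
  have hpv : φ ↑v = 0 := by simp [hφ, hφuv]; exact sub_self _
  -- no (7,2)-colouring: both directed 3-walks exist
  have hW1 : ∃ a b : V, D.Adj ↑u a ∧ D.Adj a b ∧ D.Adj b ↑v ∧ φ a = 1 ∧ φ b = 2 := by
    by_contra h3
    exact hno (hasCircColoring_of_no_three_walk G ↑u ↑v gvu.symm φ hproper hpu hpv h3)
  have hW2 : ∃ a b : V, D.Adj ↑v a ∧ D.Adj a b ∧ D.Adj b ↑u ∧ φ a = 1 ∧ φ b = 2 := by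
    by_contra h3
    refine hno (hasCircColoring_of_no_three_walk G ↑v ↑u gvu φ ?_ hpv hpu ?_)
    · rw [show s((↑v : V), ↑u) = s((↑u : V), ↑v) from Sym2.eq_swap]
      exact hproper
    · rw [show s((↑v : V), ↑u) = s((↑u : V), ↑v) from Sym2.eq_swap]
      exact h3
  obtain ⟨a, b, hua, hab, hbv, hfa, hfb⟩ := hW1
  obtain ⟨a2, b2, hva2, ha2b2, hb2u, hfa2, hfb2⟩ := hW2
  -- D-adjacency to G-adjacency and non-deleted-ness
  have toG : ∀ {s t : V}, D.Adj s t → G.Adj s t := by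
    intro s t h; rw [hD, SimpleGraph.deleteEdges_adj] at h; exact h.1
  have hne_del : ∀ {s t : V}, D.Adj s t → s(s, t) ≠ s((↑u : V), ↑v) := by
    intro s t h; rw [hD, SimpleGraph.deleteEdges_adj] at h; simpa using h.2
  -- neighbours of v are exactly u, x, y
  have hnbv : G.neighborFinset (↑v : V) = {↑u, ↑x, ↑y} := by
    symm
    apply Finset.eq_of_subset_of_card_le
    · intro s hs
      simp only [Finset.mem_insert, Finset.mem_singleton] at hs
      rw [SimpleGraph.mem_neighborFinset]
      rcases hs with rfl | rfl | rfl
      · exact gvu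
      · exact gvx
      · exact gvy
    · have h3 : ({↑u, ↑x, ↑y} : Finset V).card = 3 := by
        rw [Finset.card_insert_of_notMem (by simp [cne hux, cne huy]),
          Finset.card_insert_of_notMem (by simp [cne hxy]), Finset.card_singleton]
      have hdv : (G.neighborFinset (↑v : V)).card = 3 := hdegv
      omega
  -- b is x or y
  have hbxy : b = ↑x ∨ b = ↑y := by
    have hmem : b ∈ G.neighborFinset (↑v : V) := by
      rw [SimpleGraph.mem_neighborFinset]; exact (toG hbv).symm
    rw [hnbv] at hmem
    simp only [Finset.mem_insert, Finset.mem_singleton] at hmem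
    rcases hmem with rfl | h | h
    · exact absurd rfl (hne_del hbv)
    · exact Or.inl h
    · exact Or.inr h
  have ha2xy : a2 = ↑x ∨ a2 = ↑y := by
    have hmem : a2 ∈ G.neighborFinset (↑v : V) := by
      rw [SimpleGraph.mem_neighborFinset]; exact toG hva2
    rw [hnbv] at hmem
    simp only [Finset.mem_insert, Finset.mem_singleton] at hmem
    rcases hmem with rfl | h | h
    · exact absurd Sym2.eq_swap (hne_del hva2)
    · exact Or.inl h
    · exact Or.inr h
  -- a and b2 are neighbours of u distinct from v
  have hav : a ≠ ↑v := by
    intro h; subst h; exact (hne_del hua) rfl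
  have hb2v : b2 ≠ ↑v := by
    intro h; subst h
    exact (hne_del hb2u) (Sym2.eq_swap)
  -- case analysis
  by_cases haw : a = ↑w
  · subst haw
    rcases hbxy with rfl | rfl
    · exact killer x hvx hux (toG hab)
    · exact killer y hvy huy (toG hab)
  by_cases hb2w : b2 = ↑w
  · subst hb2w
    rcases ha2xy with rfl | rfl
    · exact killer x hvx hux (toG ha2b2).symm
    · exact killer y hvy huy (toG ha2b2).symm
  by_cases hab2 : a = b2
  · rw [hab2, hfb2] at hfa
    exact absurd hfa (by decide)
  -- otherwise u has four distinct neighbours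
  have hvw : (↑v : V) ≠ ↑w := cne (fun h => hwv h.symm)
  exact four_nbrs G hdegu hvw (Ne.symm hav) (Ne.symm hb2v) (fun h => haw h.symm)
    (fun h => hb2w h.symm) hab2 gvu.symm guw (toG hua) (toG hb2u).symm

end main


/-- If the subgraph induced on degree-3 vertices of a 4-critical graph with no
(7,2)-colouring is acyclic, then each of its components is a path or has at most four
vertices. -/
theorem stmt_13 {V : Type*} [Fintype V] (G : SimpleGraph V) [DecidableRel G.Adj]
    (hcrit : FourCritical G) (hno : ¬ HasCircColoring G 7 2)
    (hacyc : (G.induce {v | G.degree v = 3}).IsAcyclic) :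
    ∀ c : (G.induce {v | G.degree v = 3}).ConnectedComponent,
      (∃ n : ℕ, Nonempty
        (((G.induce {v | G.degree v = 3}).induce c.supp) ≃g pathGraph n)) ∨
      c.supp.ncard ≤ 4 := by
  classical
  intro c
  by_cases h4 : c.supp.ncard ≤ 4
  · exact Or.inr h4
  · left
    apply component_iso_path _ hacyc c
    intro t ht a b z hta htb htz
    by_contra hcon
    push_neg at hcon
    obtain ⟨hab, haz, hbz⟩ := hcon
    have cne : ∀ {s t : ↑{v | G.degree v = 3}}, s ≠ t → (↑s : V) ≠ ↑t :=
      fun hst hc => hst (Subtype.coe_injective hc)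
    have hnotsub : ¬ (c.supp ⊆ ({t, a, b, z} : Set _)) := by
      intro hsub
      apply h4
      have hle := Set.ncard_le_ncard hsub (Set.toFinite _)
      have h1 := Set.ncard_insert_le t ({a, b, z} : Set _)
      have h2 := Set.ncard_insert_le a ({b, z} : Set _)
      have h3 := Set.ncard_insert_le b ({z} : Set _)
      have h0 := Set.ncard_singleton z
      omega
    obtain ⟨e, he, heS⟩ := Set.not_subset.mp hnotsub
    have hreach : (G.induce {v | G.degree v = 3}).Reachable e t := by
      rw [SimpleGraph.ConnectedComponent.mem_supp_iff] at he ht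
      exact SimpleGraph.ConnectedComponent.exact (he.trans ht.symm)
    obtain ⟨q⟩ := hreach
    obtain ⟨z', m, hz'S, hmS, hadj, -, -⟩ :=
      exists_crossing (G.induce {v | G.degree v = 3}) (S := ({t, a, b, z} : Set _)) q heS
        (by simp)
    have hz't : z' ≠ t := fun h => hz'S (by simp [h])
    have hz'a : z' ≠ a := fun h => hz'S (by simp [h])
    have hz'b : z' ≠ b := fun h => hz'S (by simp [h])
    have hz'z : z' ≠ z := fun h => hz'S (by simp [h])
    simp only [Set.mem_insert_iff, Set.mem_singleton_iff] at hmS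
    rcases hmS with h | h | h | h
    · exact four_nbrs G (t := (↑t : V)) t.prop (cne hab) (cne haz) (cne (Ne.symm hz'a))
        (cne hbz) (cne (Ne.symm hz'b)) (cne (Ne.symm hz'z)) hta htb htz ((h ▸ hadj).symm)
    · exact config_contradiction G hcrit hno hacyc t a b z z' hta htb htz ((h ▸ hadj).symm)
        hab haz hbz hz't
    · exact config_contradiction G hcrit hno hacyc t b a z z' htb hta htz ((h ▸ hadj).symm)
        (Ne.symm hab) hbz haz hz't
    · exact config_contradiction G hcrit hno hacyc t z a b z' htz hta htb ((h ▸ hadj).symm)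
        (Ne.symm haz) (Ne.symm hbz) hab hz't
end
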